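/- Let $v$ be a non-isolated vertex of a finite simple graph $G$ such that the neighbor set $N_G(v)$ is a minimal vertex cover of $G$. Then a subset $C\subseteq V(G)$ is a minimal vertex cover of $G$ if and only if either $C=N_G(v)$, or $C=\{v\}\cup D$ where $D$ is a minimal vertex cover of $G\setminus v$ with $N_G(v)\not\subseteq D$. -/

import Mathlib

/-- `C` is a vertex cover of `G`: every edge meets `C`. -/
def IsVertexCover {V : Type*} (G : SimpleGraph V) (C : Set V) : Prop :=
  ∀ u w, G.Adj u w → u ∈ C ∨ w ∈ C

/-- `C` is a minimal vertex cover of `G`. -/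
def IsMinVertexCover {V : Type*} (G : SimpleGraph V) (C : Set V) : Prop :=
  IsVertexCover G C ∧ ∀ D : Set V, D ⊆ C → IsVertexCover G D → D = C

/-- The graph obtained from `G` by deleting the vertex `v` (and all edges through it). -/
def deleteVertex {V : Type*} (G : SimpleGraph V) (v : V) : SimpleGraph V where
  Adj u w := G.Adj u w ∧ u ≠ v ∧ w ≠ v
  symm := by
    constructor
    intro u w h
    exact ⟨h.1.symm, h.2.2, h.2.1⟩
  loopless := by
    constructor
    intro u h
    exact h.1.ne rfl

theorem minVertexCover_characterization
    {V : Type*} [Fintype V] (G : SimpleGraph V) (v : V)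
    (hniso : ∃ w, G.Adj v w)
    (hN : IsMinVertexCover G (G.neighborSet v)) :
    ∀ C : Set V, IsMinVertexCover G C ↔
      (C = G.neighborSet v ∨
        ∃ D : Set V, IsMinVertexCover (deleteVertex G v) D ∧
          ¬ G.neighborSet v ⊆ D ∧ C = insert v D) := by
  intro C
  constructor
  · rintro ⟨hC, hCmin⟩
    by_cases hv : v ∈ C
    · right
      refine ⟨C \ {v}, ⟨?_, ?_⟩, ?_, ?_⟩
      · intro u w huw
        rcases hC u w huw.1 with h | h
        · exact Or.inl ⟨h, huw.2.1⟩
        · exact Or.inr ⟨h, huw.2.2⟩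
      · intro D' hD' hD'cov
        have hcov : IsVertexCover G (insert v D') := by
          intro u w huw
          by_cases hu : u = v
          · exact Or.inl (by simp [hu])
          by_cases hw : w = v
          · exact Or.inr (by simp [hw])
          rcases hD'cov u w ⟨huw, hu, hw⟩ with h | h
          · exact Or.inl (Set.mem_insert_of_mem _ h)
          · exact Or.inr (Set.mem_insert_of_mem _ h)
        have hsub : insert v D' ⊆ C := by
          intro x hx
          rcases hx with rfl | hx
          · exact hv
          · exact (hD' hx).1
        have heq := hCmin _ hsub hcov
        ext x
        constructor
        · intro hx
          exact ⟨(hD' hx).1, (hD' hx).2⟩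
        · rintro ⟨hxC, hxv⟩
          have : x ∈ insert v D' := heq ▸ hxC
          rcases this with rfl | h
          · exact absurd rfl hxv
          · exact h
      · intro hsub
        have hcov : IsVertexCover G (C \ {v}) := by
          intro u w huw
          rcases hC u w huw with h | h
          · by_cases hu : u = v
            · subst hu
              exact Or.inr (hsub huw)
            · exact Or.inl ⟨h, hu⟩
          · by_cases hw : w = v
            · subst hw
              exact Or.inl (hsub huw.symm)
            · exact Or.inr ⟨h, hw⟩
        have heq := hCmin _ Set.diff_subset hcov
        have : v ∈ C \ ({v} : Set V) := by rw [heq]; exact hv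
        exact this.2 rfl
      · rw [Set.insert_diff_singleton, Set.insert_eq_self.mpr hv]
    · left
      have hNsub : G.neighborSet v ⊆ C := by
        intro w hw
        rcases hC v w hw with h | h
        · exact absurd h hv
        · exact h
      exact (hCmin _ hNsub hN.1).symm
  · rintro (rfl | ⟨D, ⟨hD, hDmin⟩, hnsub, rfl⟩)
    · exact hN
    · constructor
      · intro u w huw
        by_cases hu : u = v
        · exact Or.inl (by simp [hu])
        by_cases hw : w = v
        · exact Or.inr (by simp [hw])
        rcases hD u w ⟨huw, hu, hw⟩ with h | h
        · exact Or.inl (Set.mem_insert_of_mem _ h)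
        · exact Or.inr (Set.mem_insert_of_mem _ h)
      · intro E hE hEcov
        have hvE : v ∈ E := by
          by_contra hvE
          apply hnsub
          intro x hx
          have hxE : x ∈ E := by
            rcases hEcov v x hx with h | h
            · exact absurd h hvE
            · exact h
          rcases hE hxE with rfl | h
          · exact absurd hx (G.irrefl)
          · exact h
        have hE'sub : E \ {v} ⊆ D := by
          rintro x ⟨hxE, hxv⟩
          rcases hE hxE with rfl | h
          · exact absurd rfl hxv
          · exact h
        have hE'cov : IsVertexCover (deleteVertex G v) (E \ {v}) := by
          intro u w huw
          rcases hEcov u w huw.1 with h | h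
          · exact Or.inl ⟨h, huw.2.1⟩
          · exact Or.inr ⟨h, huw.2.2⟩
        have heq := hDmin _ hE'sub hE'cov
        rw [← heq, Set.insert_diff_singleton, Set.insert_eq_self.mpr hvE]
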